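/- With q as in the previous statement, for 0 < α and all x ≠ z, the kernel N_{α,v}(x,z) = ∫_0^∞ (1+(uv)^α)^{-1} ∫_X q(x,y,u) q(y,z,uv) dm(y) du/u satisfies |N_{α,v}(x,z)| ≤ C min(v, 1/v) d(x,z)^{-N}. -/

import Mathlib

open MeasureTheory Metric ENNReal

/-- Almost-orthogonality bound for the inner integral: using the cancellation of
`q (·, z, t)` and the Lipschitz bound on `q (x, ·, s)` we gain a factor `t / s`. -/
private lemma inner_kernel_bound
    {X : Type*} [MetricSpace X] [MeasurableSpace X] [BorelSpace X]
    (m : Measure X) (N c2 C : ℝ) (hc2 : 0 < c2) (hC : 0 < C)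
    (hA : ∀ (x : X) (r : ℝ), 0 < r → m (ball x r) ≤ ENNReal.ofReal (c2 * r ^ N))
    (q : X → X → ℝ → ℝ)
    (hq_size : ∀ x y t, 0 < t → |q x y t| ≤ C / t ^ N)
    (hq_supp : ∀ x y t, 0 < t → 4 * t < dist x y → q x y t = 0)
    (hq_cancel : ∀ (x : X) (t : ℝ), 0 < t → (∫ y, q x y t ∂m) = 0)
    (hq_symm : ∀ x y t, q x y t = q y x t)
    (hq_lip : ∀ x x' y t, 0 < t → |q x y t - q x' y t| ≤ C * dist x x' / t ^ (N + 1))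
    (s t : ℝ) (hs : 0 < s) (ht : 0 < t) (x z : X) :
    |∫ y, q x y s * q y z t ∂m| ≤ (5 * C * C * c2 * 5 ^ N) * t / s ^ (N + 1) := by
  have hsN : (0:ℝ) < s ^ N := Real.rpow_pos_of_pos hs N
  have htN : (0:ℝ) < t ^ N := Real.rpow_pos_of_pos ht N
  have hsN1 : (0:ℝ) < s ^ (N + 1) := Real.rpow_pos_of_pos hs (N + 1)
  have ht5 : (0:ℝ) < 5 * t := by linarith
  have hB : m (ball z (5 * t)) ≤ ENNReal.ofReal (c2 * (5 * t) ^ N) := hA z _ ht5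
  have hBfin : m (ball z (5 * t)) ≠ ⊤ := ne_top_of_le_ne_top ofReal_ne_top hB
  -- continuity in the space variable
  have contq : ∀ (w : X) (r : ℝ), 0 < r → Continuous fun y => q y w r := by
    intro w r hr
    refine (LipschitzWith.of_dist_le_mul
      (K := Real.toNNReal (C / r ^ (N + 1))) ?_).continuous
    intro y y'
    rw [Real.dist_eq, Real.coe_toNNReal _ (by positivity)]
    calc |q y w r - q y' w r| ≤ C * dist y y' / r ^ (N + 1) := hq_lip y y' w r hr
      _ = C / r ^ (N + 1) * dist y y' := by ring
  have cont_xs : Continuous fun y => q x y s := by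
    have h : (fun y => q x y s) = fun y => q y x s := funext fun y => hq_symm x y s
    rw [h]; exact contq x s hs
  have cont_zt : Continuous fun y => q y z t := contq z t ht
  -- vanishing outside the ball
  have hsupp : ∀ y, y ∉ ball z (5 * t) → q y z t = 0 := by
    intro y hy
    apply hq_supp y z t ht
    have h5 : 5 * t ≤ dist y z := not_lt.1 (by simpa [mem_ball] using hy)
    linarith
  -- integrability
  have hgint : Integrable (fun y => q y z t) m := by
    refine (Measure.integrableOn_of_bounded (M := C / t ^ N) hBfin
      cont_zt.aestronglyMeasurable ?_).integrable_of_forall_notMem_eq_zero hsupp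
    exact Filter.Eventually.of_forall fun y => by
      rw [Real.norm_eq_abs]; exact hq_size y z t ht
  have hhint : Integrable (fun y => (q x y s - q x z s) * q y z t) m := by
    refine (Measure.integrableOn_of_bounded (M := (C / s ^ N + C / s ^ N) * (C / t ^ N)) hBfin
      ((cont_xs.sub continuous_const).mul cont_zt).aestronglyMeasurable ?_)
      |>.integrable_of_forall_notMem_eq_zero fun y hy => by simp only [Pi.mul_apply, hsupp y hy, mul_zero]
    refine Filter.Eventually.of_forall fun y => ?_
    rw [Real.norm_eq_abs, Pi.mul_apply, Pi.sub_apply, abs_mul]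
    refine mul_le_mul ?_ (hq_size y z t ht) (abs_nonneg _) (by positivity)
    calc |q x y s - q x z s| ≤ |q x y s| + |q x z s| := abs_sub _ _
      _ ≤ C / s ^ N + C / s ^ N :=
        add_le_add (hq_size x y s hs) (hq_size x z s hs)
  -- cancellation
  have hcancel : (∫ y, q y z t ∂m) = 0 := by
    have h : (fun y => q y z t) = fun y => q z y t := funext fun y => hq_symm y z t
    rw [h]; exact hq_cancel z t ht
  -- subtract the constant
  have split : (∫ y, q x y s * q y z t ∂m)
      = ∫ y, (q x y s - q x z s) * q y z t ∂m := by
    have h : (fun y => q x y s * q y z t)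
        = fun y => (q x y s - q x z s) * q y z t + q x z s * q y z t :=
      funext fun y => by ring
    rw [h, integral_add hhint (hgint.const_mul _), integral_const_mul, hcancel,
      mul_zero, add_zero]
  rw [split]
  have hres : (∫ y, (q x y s - q x z s) * q y z t ∂m)
      = ∫ y in ball z (5 * t), (q x y s - q x z s) * q y z t ∂m :=
    (setIntegral_eq_integral_of_forall_compl_eq_zero
      (fun y hy => by rw [hsupp y hy, mul_zero])).symm
  rw [hres]
  have hbd : ∀ y ∈ ball z (5 * t),
      ‖(q x y s - q x z s) * q y z t‖ ≤ C * (5 * t) / s ^ (N + 1) * (C / t ^ N) := by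
    intro y hy
    rw [Real.norm_eq_abs, abs_mul]
    refine mul_le_mul ?_ (hq_size y z t ht) (abs_nonneg _) (by positivity)
    have hd : dist y z ≤ 5 * t := le_of_lt (mem_ball.1 hy)
    calc |q x y s - q x z s| = |q y x s - q z x s| := by
          rw [hq_symm x y s, hq_symm x z s]
      _ ≤ C * dist y z / s ^ (N + 1) := hq_lip y z x s hs
      _ ≤ C * (5 * t) / s ^ (N + 1) := by gcongr
  have htoReal : (m (ball z (5 * t))).toReal ≤ c2 * (5 * t) ^ N :=
    ENNReal.toReal_le_of_le_ofReal (by positivity) hB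
  calc |∫ y in ball z (5 * t), (q x y s - q x z s) * q y z t ∂m|
      ≤ C * (5 * t) / s ^ (N + 1) * (C / t ^ N) * (m (ball z (5 * t))).toReal := by
        rw [← Real.norm_eq_abs]
        exact norm_setIntegral_le_of_norm_le_const hBfin.lt_top hbd
    _ ≤ C * (5 * t) / s ^ (N + 1) * (C / t ^ N) * (c2 * (5 * t) ^ N) := by
        gcongr
    _ = 5 * C * C * c2 * 5 ^ N * t / s ^ (N + 1) := by
        rw [Real.mul_rpow (by norm_num : (0:ℝ) ≤ 5) ht.le]
        field_simp

/-- Bound for the outer integral: `F` vanishes on `(0, a)` and is dominated by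
`Kb * u ^ (-N-1)` elsewhere. -/
private lemma outer_kernel_bound (N a Kb : ℝ) (hN : 0 < N) (ha : 0 < a) (hKb : 0 ≤ Kb)
    (F : ℝ → ℝ)
    (hb : ∀ u : ℝ, 0 < u → |F u| ≤ Kb * u ^ (-N - 1))
    (hz : ∀ u : ℝ, 0 < u → u < a → F u = 0) :
    |∫ u in Set.Ioi (0:ℝ), F u| ≤ Kb * a ^ (-N) / N := by
  have hlt : (-N - 1 : ℝ) < -1 := by linarith
  have hint : IntegrableOn (fun u : ℝ => Kb * u ^ (-N - 1)) (Set.Ici a) :=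
    IntegrableOn.congr_set_ae ((integrableOn_Ioi_rpow_of_lt hlt ha).const_mul Kb) Ioi_ae_eq_Ici.symm
  set g : ℝ → ℝ := (Set.Ici a).indicator (fun u => Kb * u ^ (-N - 1)) with hg
  have hgint : Integrable g := (integrable_indicator_iff measurableSet_Ici).2 hint
  have hgnonneg : ∀ u : ℝ, 0 < u → 0 ≤ g u := by
    intro u hu
    exact Set.indicator_nonneg
      (fun w hw => mul_nonneg hKb (Real.rpow_nonneg (le_trans ha.le hw) _)) u
  calc |∫ u in Set.Ioi (0:ℝ), F u| ≤ ∫ u in Set.Ioi (0:ℝ), |F u| := by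
        simpa [Real.norm_eq_abs] using
          norm_integral_le_integral_norm (μ := volume.restrict (Set.Ioi 0)) F
    _ ≤ ∫ u in Set.Ioi (0:ℝ), g u := by
        refine integral_mono_of_nonneg
          (Filter.Eventually.of_forall fun u => abs_nonneg _) hgint.restrict ?_
        refine (ae_restrict_iff' measurableSet_Ioi).2
          (Filter.Eventually.of_forall fun u hu => ?_)
        have hu' : (0:ℝ) < u := hu
        show |F u| ≤ g u
        rcases lt_or_ge u a with h | h
        · rw [hz u hu' h, abs_zero]
          exact hgnonneg u hu'
        · rw [hg, Set.indicator_of_mem (show u ∈ Set.Ici a from h)]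
          exact hb u hu'
    _ = ∫ u in Set.Ici a, Kb * u ^ (-N - 1) := by
        rw [hg, setIntegral_indicator measurableSet_Ici,
          Set.inter_eq_self_of_subset_right (Set.Ici_subset_Ioi.2 ha)]
    _ = Kb * ∫ u in Set.Ioi a, u ^ (-N - 1) := by
        rw [integral_Ici_eq_integral_Ioi, integral_const_mul]
    _ = Kb * (a ^ (-N) / N) := by
        rw [integral_Ioi_rpow_of_lt hlt ha, show (-N - 1 + 1 : ℝ) = -N by ring,
          neg_div_neg_eq]
    _ = Kb * a ^ (-N) / N := by ring

/-- With `q` as in Statement 18, for `α > 0`, `v > 0` and `x ≠ z`,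
the kernel `N_{α,v}(x,z) = ∫_0^∞ (1+(uv)^α)⁻¹ ∫ q(x,y,u) q(y,z,uv) dm(y) du/u` satisfies
`|N_{α,v}(x,z)| ≤ C' min(v, 1/v) d(x,z)^{-N}`. -/
theorem N_kernel_size_bound {X : Type*} [MetricSpace X] [MeasurableSpace X] [BorelSpace X]
    (m : Measure X) (N c1 c2 C α : ℝ) (hN : 0 < N) (hc1 : 0 < c1) (hc2 : 0 < c2)
    (hA : ∀ (x : X) (r : ℝ), 0 < r →
      ENNReal.ofReal (c1 * r ^ N) ≤ m (ball x r) ∧ m (ball x r) ≤ ENNReal.ofReal (c2 * r ^ N))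
    (hinf : m Set.univ = ⊤) (hC : 0 < C) (hα : 0 < α)
    (q : X → X → ℝ → ℝ)
    (hq_size : ∀ x y t, 0 < t → |q x y t| ≤ C / t ^ N)
    (hq_supp : ∀ x y t, 0 < t → 4 * t < dist x y → q x y t = 0)
    (hq_cancel : ∀ (x : X) (t : ℝ), 0 < t → (∫ y, q x y t ∂m) = 0)
    (hq_symm : ∀ x y t, q x y t = q y x t)
    (hq_lip : ∀ x x' y t, 0 < t → |q x y t - q x' y t| ≤ C * dist x x' / t ^ (N + 1)) :
    ∃ C' : ℝ, 0 < C' ∧ ∀ v : ℝ, 0 < v → ∀ x z : X, x ≠ z →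
      |∫ u in Set.Ioi (0 : ℝ),
          (1 + (u * v) ^ α)⁻¹ * (∫ y, q x y u * q y z (u * v) ∂m) / u| ≤
        C' * min v v⁻¹ * dist x z ^ (-N) := by
  have hA2 : ∀ (x : X) (r : ℝ), 0 < r → m (ball x r) ≤ ENNReal.ofReal (c2 * r ^ N) :=
    fun x r hr => (hA x r hr).2
  set K : ℝ := 5 * C * C * c2 * 5 ^ N with hKdef
  have hK : 0 < K := by rw [hKdef]; positivity
  have h8 : (0:ℝ) < (8:ℝ) ^ N := Real.rpow_pos_of_pos (by norm_num) N
  refine ⟨K * 8 ^ N / N, by positivity, ?_⟩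
  intro v hv x z hxz
  have hD : 0 < dist x z := dist_pos.2 hxz
  have hDN : (0:ℝ) < dist x z ^ N := Real.rpow_pos_of_pos hD N
  -- vanishing of the inner integral for small u
  have hvanish : ∀ u : ℝ, 0 < u → 4 * u + 4 * (u * v) < dist x z →
      (∫ y, q x y u * q y z (u * v) ∂m) = 0 := by
    intro u hu hlt
    have hzero : ∀ y, q x y u * q y z (u * v) = 0 := by
      intro y
      rcases lt_or_ge (4 * u) (dist x y) with h | h
      · rw [hq_supp x y u hu h, zero_mul]
      · rw [hq_supp y z (u * v) (by positivity) ?_, mul_zero]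
        have htri := dist_triangle x y z
        linarith
    simp only [hzero, integral_zero]
  -- a pointwise bound on the full integrand, from a bound on the inner integral
  have hFbound : ∀ (Kb u : ℝ), 0 < u → 0 ≤ Kb →
      |∫ y, q x y u * q y z (u * v) ∂m| ≤ Kb * u →
      |(1 + (u * v) ^ α)⁻¹ * (∫ y, q x y u * q y z (u * v) ∂m) / u| ≤ Kb := by
    intro Kb u hu hKb hI
    have hpos : (0:ℝ) < 1 + (u * v) ^ α := by positivity
    have hle1 : (1 + (u * v) ^ α)⁻¹ ≤ 1 := by
      rw [inv_le_one_iff₀]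
      right
      have : (0:ℝ) ≤ (u * v) ^ α := Real.rpow_nonneg (by positivity) α
      linarith
    calc |(1 + (u * v) ^ α)⁻¹ * (∫ y, q x y u * q y z (u * v) ∂m) / u|
        = (1 + (u * v) ^ α)⁻¹ * |∫ y, q x y u * q y z (u * v) ∂m| / u := by
          rw [abs_div, abs_mul, abs_of_pos (inv_pos.2 hpos), abs_of_pos hu]
      _ ≤ 1 * (Kb * u) / u := by gcongr
      _ = Kb := by field_simp
  rcases le_total v 1 with h1 | h1
  · -- small v :  |inner| ≤ K v u^{-N-1} · u ; threshold a = D/8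
    have hmin : min v v⁻¹ = v := by
      refine min_eq_left ?_
      have h2 : (1:ℝ) ≤ v⁻¹ := (one_le_inv_iff₀.2 ⟨hv, h1⟩)
      linarith
    have key := outer_kernel_bound N (dist x z / 8) (K * v) hN (by positivity)
      (by positivity)
      (fun u => (1 + (u * v) ^ α)⁻¹ * (∫ y, q x y u * q y z (u * v) ∂m) / u) ?_ ?_
    · refine key.trans (le_of_eq ?_)
      have e1 : (dist x z / 8) ^ (-N) = 8 ^ N * (dist x z ^ N)⁻¹ := by
        rw [Real.div_rpow hD.le (by norm_num : (0:ℝ) ≤ 8),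
          Real.rpow_neg hD.le, Real.rpow_neg (by norm_num : (0:ℝ) ≤ 8)]
        rw [div_inv_eq_mul]
        ring
      rw [hmin, e1, Real.rpow_neg hD.le]
      ring
    · intro u hu
      have hinner := inner_kernel_bound m N c2 C hc2 hC hA2 q hq_size hq_supp
        hq_cancel hq_symm hq_lip u (u * v) hu (by positivity) x z
      refine hFbound (K * v * u ^ (-N - 1)) u hu (by positivity) ?_
      refine hinner.trans (le_of_eq ?_)
      rw [show (-N - 1 : ℝ) = -(N + 1) by ring, Real.rpow_neg hu.le]
      have huN1 : (0:ℝ) < u ^ (N + 1) := Real.rpow_pos_of_pos hu (N + 1)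
      field_simp
      ring
    · intro u hu hua
      simp only [hvanish u hu (by nlinarith), mul_zero, zero_div]
  · -- large v :  use the symmetric estimate ; threshold a = D/(8v)
    have hmin : min v v⁻¹ = v⁻¹ := by
      refine min_eq_right ?_
      have h2 : v⁻¹ ≤ (1:ℝ) := inv_le_one_of_one_le₀ h1
      linarith
    have hvN1 : (0:ℝ) < v ^ (N + 1) := Real.rpow_pos_of_pos hv (N + 1)
    have hvN : (0:ℝ) < v ^ N := Real.rpow_pos_of_pos hv N
    have key := outer_kernel_bound N (dist x z / (8 * v)) (K * v ^ (-N - 1)) hN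
      (by positivity) (by positivity)
      (fun u => (1 + (u * v) ^ α)⁻¹ * (∫ y, q x y u * q y z (u * v) ∂m) / u) ?_ ?_
    · refine key.trans (le_of_eq ?_)
      have e1 : (dist x z / (8 * v)) ^ (-N) = 8 ^ N * v ^ N * (dist x z ^ N)⁻¹ := by
        rw [Real.div_rpow hD.le (by positivity : (0:ℝ) ≤ 8 * v),
          Real.rpow_neg hD.le, Real.rpow_neg (by positivity : (0:ℝ) ≤ 8 * v),
          Real.mul_rpow (by norm_num : (0:ℝ) ≤ 8) hv.le]
        rw [div_inv_eq_mul]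
        ring
      have e2 : v ^ (-N - 1 : ℝ) = (v ^ N * v)⁻¹ := by
        rw [show (-N - 1 : ℝ) = -(N + 1) by ring, Real.rpow_neg hv.le,
          Real.rpow_add hv, Real.rpow_one]
      rw [hmin, e1, e2, Real.rpow_neg hD.le]
      field_simp
    · intro u hu
      have huv : (0:ℝ) < u * v := by positivity
      have hswap : (fun y => q x y u * q y z (u * v))
          = fun y => q z y (u * v) * q y x u :=
        funext fun y => by rw [hq_symm x y u, hq_symm y z (u * v)]; ring
      have hinner := inner_kernel_bound m N c2 C hc2 hC hA2 q hq_size hq_supp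
        hq_cancel hq_symm hq_lip (u * v) u huv hu z x
      refine hFbound (K * v ^ (-N - 1) * u ^ (-N - 1)) u hu (by positivity) ?_
      rw [hswap]
      refine hinner.trans (le_of_eq ?_)
      rw [Real.mul_rpow hu.le hv.le,
        show (-N - 1 : ℝ) = -(N + 1) by ring, Real.rpow_neg hu.le, Real.rpow_neg hv.le]
      have huN1 : (0:ℝ) < u ^ (N + 1) := Real.rpow_pos_of_pos hu (N + 1)
      field_simp
      ring
    · intro u hu hua
      have hlt : 4 * u + 4 * (u * v) < dist x z := by
        rw [lt_div_iff₀ (by positivity : (0:ℝ) < 8 * v)] at hua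
        nlinarith
      simp only [hvanish u hu hlt, mul_zero, zero_div]
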